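/- Let X ~ Bernoulli(α) and Y ~ Bernoulli(β) be independent with 0 < β ≤ α < 1, and let λ := log((1−β)α/((1−α)β)). Then E[exp(−(λ/2)(X − Y))] = (√(αβ) + √((1−α)(1−β)))². -/

import Mathlib

/-- For independent `X ~ Bern(α)`, `Y ~ Bern(β)` with `0 < β ≤ α < 1` and
`λ = log ((1-β)α / ((1-α)β))`, the expectation `E[exp(-(λ/2)(X - Y))]`,
written out over the four outcomes, equals `(√(αβ) + √((1-α)(1-β)))²`. -/
theorem exp_moment_bernoulli_diff (α β : ℝ) (hβ : 0 < β) (hβα : β ≤ α) (hα : α < 1)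
    (lam : ℝ) (hlam : lam = Real.log ((1 - β) * α / ((1 - α) * β))) :
    α * β * Real.exp (-(lam / 2) * (1 - 1))
      + α * (1 - β) * Real.exp (-(lam / 2) * (1 - 0))
      + (1 - α) * β * Real.exp (-(lam / 2) * (0 - 1))
      + (1 - α) * (1 - β) * Real.exp (-(lam / 2) * (0 - 0))
      = (Real.sqrt (α * β) + Real.sqrt ((1 - α) * (1 - β))) ^ 2 := by
  have hα0 : 0 < α := lt_of_lt_of_le hβ hβα
  have h1α : 0 < 1 - α := by linarith
  have h1β : 0 < 1 - β := by linarith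
  have hr : 0 < (1 - β) * α / ((1 - α) * β) :=
    div_pos (mul_pos h1β hα0) (mul_pos h1α hβ)
  have he : Real.exp lam = (1 - β) * α / ((1 - α) * β) := by
    rw [hlam, Real.exp_log hr]
  have hp : Real.exp (lam / 2) ^ 2 = (1 - β) * α / ((1 - α) * β) := by
    rw [← he, sq, ← Real.exp_add]
    ring_nf
  have hkey : Real.exp (lam / 2) * ((1 - α) * β) =
      Real.sqrt (α * β) * Real.sqrt ((1 - α) * (1 - β)) := by
    have hs : Real.sqrt (α * β) * Real.sqrt ((1 - α) * (1 - β)) =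
        Real.sqrt ((α * β) * ((1 - α) * (1 - β))) :=
      (Real.sqrt_mul (by positivity) _).symm
    rw [hs]
    have h1 : 0 ≤ Real.exp (lam / 2) * ((1 - α) * β) := by positivity
    have h2 : (Real.exp (lam / 2) * ((1 - α) * β)) ^ 2 =
        (α * β) * ((1 - α) * (1 - β)) := by
      rw [mul_pow, hp]
      field_simp
    rw [← h2, Real.sqrt_sq h1]
  have hq : Real.exp (-(lam / 2)) ^ 2 = (1 - α) * β / ((1 - β) * α) := by
    rw [Real.exp_neg, inv_pow, hp]
    field_simp
  have hkey2 : Real.exp (-(lam / 2)) * ((1 - β) * α) =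
      Real.sqrt (α * β) * Real.sqrt ((1 - α) * (1 - β)) := by
    have hs : Real.sqrt (α * β) * Real.sqrt ((1 - α) * (1 - β)) =
        Real.sqrt ((α * β) * ((1 - α) * (1 - β))) :=
      (Real.sqrt_mul (by positivity) _).symm
    rw [hs]
    have h1 : 0 ≤ Real.exp (-(lam / 2)) * ((1 - β) * α) := by positivity
    have h2 : (Real.exp (-(lam / 2)) * ((1 - β) * α)) ^ 2 =
        (α * β) * ((1 - α) * (1 - β)) := by
      rw [mul_pow, hq]
      field_simp
    rw [← h2, Real.sqrt_sq h1]
  have e0 : (-(lam / 2) * ((1:ℝ) - 1)) = 0 := by ring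
  have e1 : (-(lam / 2) * ((1:ℝ) - 0)) = -(lam / 2) := by ring
  have e2 : (-(lam / 2) * ((0:ℝ) - 1)) = lam / 2 := by ring
  have e3 : (-(lam / 2) * ((0:ℝ) - 0)) = 0 := by ring
  rw [e0, e1, e2, e3, Real.exp_zero]
  have hsq1 : Real.sqrt (α * β) ^ 2 = α * β := Real.sq_sqrt (by positivity)
  have hsq2 : Real.sqrt ((1 - α) * (1 - β)) ^ 2 = (1 - α) * (1 - β) :=
    Real.sq_sqrt (by positivity)
  nlinarith [hkey, hkey2, hsq1, hsq2]
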